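/- arXiv:1502.03317 — 2 statements merged into one kernel-verified Lean document; each statement's English description precedes it below -/
import Mathlib

section
/- Let d ≥ 1 and let 1 ≤ q₁, q₂, q₃, s₁, s₂, s₃ ≤ ∞ satisfy: q₁ ≥ s₁, q₂ ≥ s₂, 1/q₂ − 1/s₂ ≥ 1/s₃ − 1/q₁, 0 ≥ 1/s₃ − 1/q₂ (i.e. q₂ ≤ s₃), and (1/q₁ − 1/s₁) + (1/q₂ − 1/s₂) = 1/s₃ − 1/q₃. Then for all f₁ ∈ L^{q₁}(ℝ^d), f₂ ∈ L^{q₂}(ℝ^d), g ∈ L^{q₃}(ℝ^d): (∫_{ℝ^d} (∫_{ℝ^d} (∫_{ℝ^d} |f₁(t₁) f₂(t₂) g(x+t₁+t₂)|^{s₁} dt₁)^{s₂/s₁} dt₂)^{s₃/s₂} dx)^{1/s₃} ≤ ‖f₁‖_{L^{q₁}} ‖f₂‖_{L^{q₂}} ‖g‖_{L^{q₃}}, with essential suprema replacing integrals for infinite exponents. -/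
open MeasureTheory Complex
open scoped ENNReal NNReal RealInnerProductSpace

noncomputable section

abbrev Ed (d : ℕ) := EuclideanSpace ℝ (Fin d)

/-- `e2pi a = e^{2πi a}`. -/
def e2pi (a : ℝ) : ℂ := Complex.exp (2 * Real.pi * Complex.I * (a : ℂ))

/-- Short-time Fourier transform `V_φ f (t, ν)`. -/
def STFT (d : ℕ) (φ f : Ed d → ℂ) (t ν : Ed d) : ℂ :=
  ∫ y, f y * e2pi (-⟪y, ν⟫) * φ (y - t)

/-- The Gaussian window `e^{-‖x‖²}` as a complex-valued function. -/
def gauss (d : ℕ) : Ed d → ℂ := fun x => (Real.exp (-‖x‖ ^ 2) : ℝ)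

/-- `L^p`-type norm (`ℝ≥0∞`-valued) with essential supremum in case `p = ∞`. -/
def eNorm {α : Type*} [MeasurableSpace α] (μ : Measure α) (p : ℝ≥0∞) (F : α → ℝ≥0∞) : ℝ≥0∞ :=
  if p = ∞ then essSup F μ else (∫⁻ a, F a ^ p.toReal ∂μ) ^ (1 / p.toReal)

/-- Modulation space norm `‖f‖_{M^{p,q}}` with the Gaussian window. -/
def modNorm (d : ℕ) (p q : ℝ≥0∞) (f : Ed d → ℂ) : ℝ≥0∞ :=
  eNorm volume q fun ν => eNorm volume p fun t => (‖STFT d (gauss d) f t ν‖₊ : ℝ≥0∞)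

/-- The Gaussian window on `ℝ^{3d}`. -/
def gauss3 (d : ℕ) : Ed d × Ed d × Ed d → ℂ :=
  fun X => (Real.exp (-‖X.1‖ ^ 2 - ‖X.2.1‖ ^ 2 - ‖X.2.2‖ ^ 2) : ℝ)

/-- Symbol short-time Fourier transform of a symbol on `ℝ^{3d}`. -/
def symbSTFT (d : ℕ) (Φ σ : Ed d × Ed d × Ed d → ℂ) (x t₁ t₂ ξ₁ ξ₂ ν : Ed d) : ℂ :=
  ∫ X : Ed d × Ed d × Ed d,
    σ X * Φ (X.1 - x, X.2.1 - ξ₁, X.2.2 - ξ₂) *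
      e2pi (-(⟪X.1, ν⟫ - ⟪t₁, X.2.1⟫ - ⟪t₂, X.2.2⟫))

/-- Fourier transform. -/
def FT (d : ℕ) (f : Ed d → ℂ) (ξ : Ed d) : ℂ := ∫ y, f y * e2pi (-⟪y, ξ⟫)

/-- Bilinear pseudodifferential operator `T_σ`. -/
def biOp (d : ℕ) (σ : Ed d × Ed d × Ed d → ℂ) (f₁ f₂ : Ed d → ℂ) (x : Ed d) : ℂ :=
  ∫ ξ : Ed d × Ed d,
    e2pi ⟪x, ξ.1 + ξ.2⟫ * σ (x, ξ.1, ξ.2) * FT d f₁ ξ.1 * FT d f₂ ξ.2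


section Aux

variable {α : Type*} [MeasurableSpace α] {μ : Measure α}

lemma eNorm_mono {p : ℝ≥0∞} {F G : α → ℝ≥0∞} (h : ∀ a, F a ≤ G a) :
    eNorm μ p F ≤ eNorm μ p G := by
  unfold eNorm
  split_ifs
  · exact essSup_mono_ae (Filter.Eventually.of_forall h)
  · exact ENNReal.rpow_le_rpow
      (lintegral_mono fun a => ENNReal.rpow_le_rpow (h a) ENNReal.toReal_nonneg)
      (by positivity)

lemma eNorm_congr_ae {p : ℝ≥0∞} {F G : α → ℝ≥0∞} (h : F =ᵐ[μ] G) :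
    eNorm μ p F = eNorm μ p G := by
  unfold eNorm
  split_ifs
  · exact essSup_congr_ae h
  · rw [lintegral_congr_ae (h.mono fun a ha => by rw [ha])]

lemma eNorm_rpow {p : ℝ≥0∞} {S : ℝ} (hS : 0 < S) (F : α → ℝ≥0∞) :
    eNorm μ p (fun a => F a ^ S) = (eNorm μ (p * ENNReal.ofReal S) F) ^ S := by
  unfold eNorm
  rcases eq_or_ne p ∞ with rfl | hptop
  · rw [if_pos rfl, if_pos (by simp [ENNReal.mul_eq_top, (ENNReal.ofReal_pos.mpr hS).ne'])]
    simpa using ((ENNReal.orderIsoRpow S hS).essSup_apply F μ).symm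
  · have hmt : p * ENNReal.ofReal S ≠ ∞ := ENNReal.mul_ne_top hptop ENNReal.ofReal_ne_top
    rw [if_neg hptop, if_neg hmt]
    have htr : (p * ENNReal.ofReal S).toReal = p.toReal * S := by
      rw [ENNReal.toReal_mul, ENNReal.toReal_ofReal hS.le]
    have h1 : ∀ a : ℝ≥0∞, (a ^ S) ^ p.toReal = a ^ (p.toReal * S) := fun a => by
      rw [← ENNReal.rpow_mul, mul_comm]
    simp_rw [h1, htr, ← ENNReal.rpow_mul]
    rcases eq_or_ne p 0 with rfl | hp0
    · simp
    · have hP : 0 < p.toReal := ENNReal.toReal_pos hp0 hptop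
      congr 1
      field_simp

lemma eNorm_const_mul {p : ℝ≥0∞} (hp : p ≠ 0) {c : ℝ≥0∞} (hc : c ≠ ∞) (F : α → ℝ≥0∞) :
    eNorm μ p (fun a => c * F a) = c * eNorm μ p F := by
  unfold eNorm
  split_ifs with h
  · exact ENNReal.essSup_const_mul
  · have hP : 0 < p.toReal := ENNReal.toReal_pos hp h
    simp_rw [ENNReal.mul_rpow_of_nonneg _ _ hP.le]
    rw [lintegral_const_mul' _ _ (by simp [ENNReal.rpow_eq_top_iff, hc] : c ^ p.toReal ≠ ∞),
      ENNReal.mul_rpow_of_nonneg _ _ (by positivity : (0:ℝ) ≤ 1 / p.toReal),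
      ← ENNReal.rpow_mul, mul_one_div, div_self hP.ne', ENNReal.rpow_one]

lemma eNorm_zero {p : ℝ≥0∞} (hp : p ≠ 0) : eNorm μ p (fun _ => (0:ℝ≥0∞)) = 0 := by
  unfold eNorm
  split_ifs with h
  · exact le_antisymm (essSup_le_of_ae_le 0 (Filter.Eventually.of_forall fun _ => le_rfl)) zero_le
  · have hP : 0 < p.toReal := ENNReal.toReal_pos hp h
    rw [lintegral_congr fun a => ENNReal.zero_rpow_of_pos hP, lintegral_zero,
      ENNReal.zero_rpow_of_pos (by positivity : (0:ℝ) < 1 / p.toReal)]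

end Aux

section Group

variable {G : Type*} [MeasurableSpace G] [AddCommGroup G] [MeasurableAdd₂ G]
  {μ : Measure G} [SFinite μ] [μ.IsAddLeftInvariant] [μ.IsAddRightInvariant]

lemma essSup_translate {G' : G → ℝ≥0∞} (hG : Measurable G') (x : G) :
    essSup (fun t => G' (x + t)) μ = essSup G' μ := by
  have h := essSup_map_measure_of_measurable (μ := μ) hG
    (measurePreserving_add_left μ x).measurable.aemeasurable
  rw [(measurePreserving_add_left μ x).map_eq] at h
  exact h.symm

lemma young_core' {F G' : G → ℝ≥0∞} (hF : Measurable F) (hG : Measurable G')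
    {p q r : ℝ} (hp : 1 ≤ p) (hq : 1 ≤ q) (hr : 1 ≤ r)
    (hpqr : 1/p + 1/q = 1 + 1/r) :
    ∫⁻ x, (∫⁻ t, F t * G' (x + t) ∂μ) ^ r ∂μ ≤
      (∫⁻ t, F t ^ p ∂μ) ^ (r/p) * (∫⁻ t, G' t ^ q ∂μ) ^ (r/q) := by
  have hp0 : (0:ℝ) < p := lt_of_lt_of_le one_pos hp
  have hq0 : (0:ℝ) < q := lt_of_lt_of_le one_pos hq
  have hr0 : (0:ℝ) < r := lt_of_lt_of_le one_pos hr
  have hw2 : (0:ℝ) ≤ 1/p - 1/r := by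
    have h1 : 1/q ≤ 1 := by rw [div_le_one hq0]; exact hq
    linarith
  have hw3 : (0:ℝ) ≤ 1/q - 1/r := by
    have h1 : 1/p ≤ 1 := by rw [div_le_one hp0]; exact hp
    linarith
  set A := ∫⁻ t, F t ^ p ∂μ with hA
  set B := ∫⁻ t, G' t ^ q ∂μ with hB
  set C : G → ℝ≥0∞ := fun x => ∫⁻ t, F t ^ p * G' (x + t) ^ q ∂μ with hC
  have hCmeas : Measurable C := by
    apply Measurable.lintegral_prod_right (f := fun x t => F t ^ p * G' (x + t) ^ q)
    exact ((hF.comp measurable_snd).pow_const p).mul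
      ((hG.comp (measurable_fst.add measurable_snd)).pow_const q)
  have key : ∀ x, (∫⁻ t, F t * G' (x + t) ∂μ) ≤
      (C x) ^ (1/r) * (A ^ (1/p - 1/r) * B ^ (1/q - 1/r)) := by
    intro x
    have hGx : Measurable fun t => G' (x + t) := hG.comp (measurable_const_add x)
    have hid : ∀ t, F t * G' (x + t) =
        (F t ^ p * G' (x + t) ^ q) ^ (1/r) *
          ((F t ^ p) ^ (1/p - 1/r) * (G' (x + t) ^ q) ^ (1/q - 1/r)) := by
      intro t
      rw [ENNReal.mul_rpow_of_nonneg _ _ (one_div_nonneg.mpr hr0.le),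
        ← ENNReal.rpow_mul, ← ENNReal.rpow_mul, ← ENNReal.rpow_mul, ← ENNReal.rpow_mul,
        mul_mul_mul_comm,
        ← ENNReal.rpow_add_of_nonneg (p * (1/r)) (p * (1/p - 1/r))
          (mul_nonneg hp0.le (one_div_nonneg.mpr hr0.le)) (mul_nonneg hp0.le hw2),
        ← ENNReal.rpow_add_of_nonneg (q * (1/r)) (q * (1/q - 1/r))
          (mul_nonneg hq0.le (one_div_nonneg.mpr hr0.le)) (mul_nonneg hq0.le hw3),
        (by field_simp; ring : p * (1/r) + p * (1/p - 1/r) = 1),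
        (by field_simp; ring : q * (1/r) + q * (1/q - 1/r) = 1),
        ENNReal.rpow_one, ENNReal.rpow_one]
    rw [lintegral_congr hid]
    have H3 := ENNReal.lintegral_prod_norm_pow_le (μ := μ) Finset.univ
      (f := ![fun t => F t ^ p * G' (x + t) ^ q, fun t => F t ^ p, fun t => G' (x + t) ^ q])
      (p := ![1/r, 1/p - 1/r, 1/q - 1/r])
      (by
        intro i _
        fin_cases i
        · exact ((hF.pow_const p).mul (hGx.pow_const q)).aemeasurable
        · exact (hF.pow_const p).aemeasurable
        · exact (hGx.pow_const q).aemeasurable)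
      (by
        simp only [Fin.sum_univ_three, Matrix.cons_val_zero, Matrix.cons_val_one,
          Matrix.head_cons, Matrix.cons_val_two, Matrix.tail_cons]
        linarith)
      (by
        intro i _
        fin_cases i
        · exact one_div_nonneg.mpr hr0.le
        · exact hw2
        · exact hw3)
    simp only [Fin.prod_univ_three, Matrix.cons_val_zero, Matrix.cons_val_one, Matrix.head_cons,
      Matrix.cons_val_two, Matrix.tail_cons] at H3
    calc ∫⁻ t, (F t ^ p * G' (x+t) ^ q) ^ (1/r) *
          ((F t ^ p) ^ (1/p - 1/r) * (G' (x+t) ^ q) ^ (1/q - 1/r)) ∂μ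
        = ∫⁻ t, (F t ^ p * G' (x+t) ^ q) ^ (1/r) * (F t ^ p) ^ (1/p - 1/r) *
            (G' (x+t) ^ q) ^ (1/q - 1/r) ∂μ := by
          apply lintegral_congr; intro t; ring
      _ ≤ (∫⁻ t, F t ^ p * G' (x+t) ^ q ∂μ) ^ (1/r) * (∫⁻ t, F t ^ p ∂μ) ^ (1/p - 1/r) *
            (∫⁻ t, G' (x+t) ^ q ∂μ) ^ (1/q - 1/r) := H3
      _ = (C x) ^ (1/r) * (A ^ (1/p - 1/r) * B ^ (1/q - 1/r)) := by
          rw [lintegral_add_left_eq_self (fun y => G' y ^ q) x, ← hA, ← hB]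
          ring
  have key2 : ∀ x, (∫⁻ t, F t * G' (x + t) ∂μ) ^ r ≤
      C x * (A ^ (r * (1/p - 1/r)) * B ^ (r * (1/q - 1/r))) := by
    intro x
    calc (∫⁻ t, F t * G' (x + t) ∂μ) ^ r
        ≤ ((C x) ^ (1/r) * (A ^ (1/p - 1/r) * B ^ (1/q - 1/r))) ^ r :=
          ENNReal.rpow_le_rpow (key x) hr0.le
      _ = C x * (A ^ (r * (1/p - 1/r)) * B ^ (r * (1/q - 1/r))) := by
          rw [ENNReal.mul_rpow_of_nonneg _ _ hr0.le, ENNReal.mul_rpow_of_nonneg _ _ hr0.le,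
            ← ENNReal.rpow_mul, ← ENNReal.rpow_mul, ← ENNReal.rpow_mul,
            one_div_mul_cancel hr0.ne', ENNReal.rpow_one, mul_comm (1/p - 1/r) r,
            mul_comm (1/q - 1/r) r]
  have swap : ∫⁻ x, C x ∂μ = A * B := by
    rw [hC]
    rw [lintegral_lintegral_swap (((hF.comp measurable_snd).pow_const p).mul
      ((hG.comp (measurable_fst.add measurable_snd)).pow_const q)).aemeasurable]
    have step : ∀ t, ∫⁻ x, F t ^ p * G' (x + t) ^ q ∂μ = F t ^ p * B := by
      intro t
      rw [lintegral_const_mul (F t ^ p) (f := fun x => G' (x + t) ^ q)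
        ((hG.comp (measurable_add_const t)).pow_const q)]
      congr 1
      exact lintegral_add_right_eq_self (fun y => G' y ^ q) t
    rw [lintegral_congr step, lintegral_mul_const _ (hF.pow_const p)]
  have collect : ∀ (x : ℝ≥0∞) (c : ℝ), 0 ≤ c → x * x ^ c = x ^ (1 + c) := by
    intro x c hc
    rw [ENNReal.rpow_add_of_nonneg _ _ zero_le_one hc, ENNReal.rpow_one]
  calc ∫⁻ x, (∫⁻ t, F t * G' (x + t) ∂μ) ^ r ∂μ
      ≤ ∫⁻ x, C x * (A ^ (r * (1/p - 1/r)) * B ^ (r * (1/q - 1/r))) ∂μ :=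
        lintegral_mono key2
    _ = (A * B) * (A ^ (r * (1/p - 1/r)) * B ^ (r * (1/q - 1/r))) := by
        rw [lintegral_mul_const _ hCmeas, swap]
    _ = (A * A ^ (r * (1/p - 1/r))) * (B * B ^ (r * (1/q - 1/r))) := by ring
    _ = A ^ (r/p) * B ^ (r/q) := by
        rw [collect A _ (mul_nonneg hr0.le hw2), collect B _ (mul_nonneg hr0.le hw3),
          (by field_simp; ring : (1:ℝ) + r * (1/p - 1/r) = r/p),
          (by field_simp; ring : (1:ℝ) + r * (1/q - 1/r) = r/q)]

lemma young_core {F G' : G → ℝ≥0∞} (hF : AEMeasurable F μ) (hG : Measurable G')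
    {p q r : ℝ} (hp : 1 ≤ p) (hq : 1 ≤ q) (hr : 1 ≤ r)
    (hpqr : 1/p + 1/q = 1 + 1/r) :
    ∫⁻ x, (∫⁻ t, F t * G' (x + t) ∂μ) ^ r ∂μ ≤
      (∫⁻ t, F t ^ p ∂μ) ^ (r/p) * (∫⁻ t, G' t ^ q ∂μ) ^ (r/q) := by
  obtain ⟨F', hF'm, hFF'⟩ := hF
  have h1 : ∀ x, ∫⁻ t, F t * G' (x + t) ∂μ = ∫⁻ t, F' t * G' (x + t) ∂μ := fun x =>
    lintegral_congr_ae (hFF'.mono fun t ht => by simp only [ht])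
  have h2 : ∫⁻ t, F t ^ p ∂μ = ∫⁻ t, F' t ^ p ∂μ :=
    lintegral_congr_ae (hFF'.mono fun t ht => by simp only [ht])
  calc ∫⁻ x, (∫⁻ t, F t * G' (x + t) ∂μ) ^ r ∂μ
      = ∫⁻ x, (∫⁻ t, F' t * G' (x + t) ∂μ) ^ r ∂μ := lintegral_congr fun x => by rw [h1 x]
    _ ≤ (∫⁻ t, F' t ^ p ∂μ) ^ (r/p) * (∫⁻ t, G' t ^ q ∂μ) ^ (r/q) :=
        young_core' hF'm hG hp hq hr hpqr
    _ = (∫⁻ t, F t ^ p ∂μ) ^ (r/p) * (∫⁻ t, G' t ^ q ∂μ) ^ (r/q) := by rw [h2]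


lemma eNorm_eq_essSup {α : Type*} [MeasurableSpace α] (ν : Measure α) (F : α → ℝ≥0∞) :
    eNorm ν ∞ F = essSup F ν := by simp [eNorm]

lemma eNorm_eq_lintegral {α : Type*} [MeasurableSpace α] (ν : Measure α) {p : ℝ≥0∞}
    (h : p ≠ ∞) (F : α → ℝ≥0∞) :
    eNorm ν p F = (∫⁻ a, F a ^ p.toReal ∂ν) ^ (1 / p.toReal) := by simp [eNorm, h]

lemma eNorm_one {α : Type*} [MeasurableSpace α] (ν : Measure α) (F : α → ℝ≥0∞) :
    eNorm ν 1 F = ∫⁻ a, F a ∂ν := by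
  rw [eNorm_eq_lintegral ν (by simp) F]
  simp

lemma eNorm_nnnorm_eq_eLpNorm {α : Type*} [MeasurableSpace α] (ν : Measure α) {f : α → ℂ}
    {e : ℝ≥0∞} (he : e ≠ 0) :
    eNorm ν e (fun a => (‖f a‖₊ : ℝ≥0∞)) = eLpNorm f e ν := by
  rcases eq_or_ne e ∞ with rfl | het
  · rw [eNorm_eq_essSup, eLpNorm_exponent_top]
    rfl
  · simp only [eNorm_eq_lintegral ν het, eLpNorm_eq_lintegral_rpow_enorm_toReal he het, enorm_eq_nnnorm]

lemma young {F G' : G → ℝ≥0∞} (hF : AEMeasurable F μ) (hG : Measurable G')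
    {p q r : ℝ≥0∞} (hp : 1 ≤ p) (hq : 1 ≤ q) (hr : 1 ≤ r)
    (h : 1/p + 1/q = 1 + 1/r) :
    eNorm μ r (fun x => ∫⁻ t, F t * G' (x + t) ∂μ) ≤ eNorm μ p F * eNorm μ q G' := by
  have hp0 : p ≠ 0 := (lt_of_lt_of_le zero_lt_one hp).ne'
  have hq0 : q ≠ 0 := (lt_of_lt_of_le zero_lt_one hq).ne'
  have hr0 : r ≠ 0 := (lt_of_lt_of_le zero_lt_one hr).ne'
  rcases eq_or_ne r ∞ with rfl | hrtop
  · have hpq : 1/p + 1/q = 1 := by simpa using h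
    rw [eNorm_eq_essSup]
    refine essSup_le_of_ae_le _ (Filter.Eventually.of_forall fun x => ?_)
    rcases eq_or_ne p ∞ with rfl | hptop
    · have hq1 : q = 1 := by
        rw [ENNReal.div_top, zero_add, one_div] at hpq
        rw [← inv_inv q, hpq, inv_one]
      subst hq1
      rw [eNorm_eq_essSup, eNorm_one]
      calc ∫⁻ t, F t * G' (x + t) ∂μ
          ≤ ∫⁻ t, essSup F μ * G' (x + t) ∂μ := by
            refine lintegral_mono_ae ((ae_le_essSup (f := F)).mono fun t ht => ?_)
            exact mul_le_mul_left ht _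
        _ = essSup F μ * ∫⁻ t, G' (x + t) ∂μ :=
            lintegral_const_mul _ (hG.comp (measurable_const_add x))
        _ = essSup F μ * ∫⁻ t, G' t ∂μ := by rw [lintegral_add_left_eq_self G' x]
    rcases eq_or_ne q ∞ with rfl | hqtop
    · have hp1 : p = 1 := by
        rw [ENNReal.div_top, add_zero, one_div] at hpq
        rw [← inv_inv p, hpq, inv_one]
      subst hp1
      rw [eNorm_eq_essSup, eNorm_one]
      have haeb : ∀ᵐ t ∂μ, G' (x + t) ≤ essSup G' μ := by
        have h1 := ae_le_essSup (μ := μ) (f := fun t => G' (x + t))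
        rwa [essSup_translate hG x] at h1
      calc ∫⁻ t, F t * G' (x + t) ∂μ
          ≤ ∫⁻ t, F t * essSup G' μ ∂μ := by
            refine lintegral_mono_ae (haeb.mono fun t ht => ?_)
            exact mul_le_mul_right ht _
        _ = (∫⁻ t, F t ∂μ) * essSup G' μ := lintegral_mul_const'' _ hF
    · rw [eNorm_eq_lintegral μ hptop, eNorm_eq_lintegral μ hqtop]
      have hP : 0 < p.toReal := ENNReal.toReal_pos hp0 hptop
      have hQ : 0 < q.toReal := ENNReal.toReal_pos hq0 hqtop
      have hsum : 1 / p.toReal + 1 / q.toReal = 1 := by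
        have := congrArg ENNReal.toReal hpq
        rwa [ENNReal.toReal_add (by simp [hp0]) (by simp [hq0]), ENNReal.toReal_div,
          ENNReal.toReal_div, ENNReal.toReal_one] at this
      have hid : ∀ t, F t * G' (x + t) =
          (F t ^ p.toReal) ^ (1 / p.toReal) * (G' (x + t) ^ q.toReal) ^ (1 / q.toReal) := by
        intro t
        rw [← ENNReal.rpow_mul, ← ENNReal.rpow_mul, mul_one_div, div_self hP.ne',
          mul_one_div, div_self hQ.ne', ENNReal.rpow_one, ENNReal.rpow_one]
      calc ∫⁻ t, F t * G' (x + t) ∂μ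
          = ∫⁻ t, (F t ^ p.toReal) ^ (1 / p.toReal) *
              (G' (x + t) ^ q.toReal) ^ (1 / q.toReal) ∂μ := lintegral_congr hid
        _ ≤ (∫⁻ t, F t ^ p.toReal ∂μ) ^ (1 / p.toReal) *
              (∫⁻ t, G' (x + t) ^ q.toReal ∂μ) ^ (1 / q.toReal) :=
            ENNReal.lintegral_mul_norm_pow_le (hF.pow_const _)
              ((hG.comp (measurable_const_add x)).pow_const _).aemeasurable
              (by positivity) (by positivity) hsum
        _ = (∫⁻ t, F t ^ p.toReal ∂μ) ^ (1 / p.toReal) *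
              (∫⁻ t, G' t ^ q.toReal ∂μ) ^ (1 / q.toReal) := by
            rw [lintegral_add_left_eq_self (fun y => G' y ^ q.toReal) x]
  · -- r finite
    have hptop : p ≠ ∞ := by
      intro hp'
      rw [hp', ENNReal.div_top, zero_add] at h
      have h1 : 1/q ≤ 1 := by rw [one_div]; exact ENNReal.inv_le_one.mpr hq
      have h2 : (1:ℝ≥0∞) + 1/r ≤ 1 + 0 := by rw [add_zero]; exact h ▸ h1
      have h3 : 1/r ≤ 0 := (ENNReal.add_le_add_iff_left ENNReal.one_ne_top).mp h2
      have h4 : 1/r = 0 := le_antisymm h3 zero_le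
      rw [one_div, ENNReal.inv_eq_zero] at h4
      exact hrtop h4
    have hqtop : q ≠ ∞ := by
      intro hq'
      rw [hq', ENNReal.div_top, add_zero] at h
      have h1 : 1/p ≤ 1 := by rw [one_div]; exact ENNReal.inv_le_one.mpr hp
      have h2 : (1:ℝ≥0∞) + 1/r ≤ 1 + 0 := by rw [add_zero]; exact h ▸ h1
      have h3 : 1/r ≤ 0 := (ENNReal.add_le_add_iff_left ENNReal.one_ne_top).mp h2
      have h4 : 1/r = 0 := le_antisymm h3 zero_le
      rw [one_div, ENNReal.inv_eq_zero] at h4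
      exact hrtop h4
    have hP1 : (1:ℝ) ≤ p.toReal := by simpa using ENNReal.toReal_mono hptop hp
    have hQ1 : (1:ℝ) ≤ q.toReal := by simpa using ENNReal.toReal_mono hqtop hq
    have hR1 : (1:ℝ) ≤ r.toReal := by simpa using ENNReal.toReal_mono hrtop hr
    have hP0 : (0:ℝ) < p.toReal := lt_of_lt_of_le one_pos hP1
    have hQ0 : (0:ℝ) < q.toReal := lt_of_lt_of_le one_pos hQ1
    have hR0 : (0:ℝ) < r.toReal := lt_of_lt_of_le one_pos hR1
    have hsum : 1/p.toReal + 1/q.toReal = 1 + 1/r.toReal := by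
      have h' := congrArg ENNReal.toReal h
      rwa [ENNReal.toReal_add (by simp [hp0]) (by simp [hq0]),
        ENNReal.toReal_add (by simp) (by simp [hr0]),
        ENNReal.toReal_div, ENNReal.toReal_div, ENNReal.toReal_div, ENNReal.toReal_one] at h'
    rw [eNorm_eq_lintegral μ hrtop, eNorm_eq_lintegral μ hptop, eNorm_eq_lintegral μ hqtop]
    calc (∫⁻ x, (∫⁻ t, F t * G' (x + t) ∂μ) ^ r.toReal ∂μ) ^ (1/r.toReal)
        ≤ ((∫⁻ t, F t ^ p.toReal ∂μ) ^ (r.toReal/p.toReal) *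
           (∫⁻ t, G' t ^ q.toReal ∂μ) ^ (r.toReal/q.toReal)) ^ (1/r.toReal) :=
          ENNReal.rpow_le_rpow (young_core hF hG hP1 hQ1 hR1 hsum) (by positivity)
      _ = (∫⁻ t, F t ^ p.toReal ∂μ) ^ (1/p.toReal) *
           (∫⁻ t, G' t ^ q.toReal ∂μ) ^ (1/q.toReal) := by
          rw [ENNReal.mul_rpow_of_nonneg _ _ (by positivity), ← ENNReal.rpow_mul,
            ← ENNReal.rpow_mul]
          congr 2
          · field_simp
          · field_simp

lemma mixedYoung {F G' : G → ℝ≥0∞} (hF : AEMeasurable F μ) (hG : Measurable G')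
    {s r q p : ℝ≥0∞} (hs : 1 ≤ s) (hq1 : 1 ≤ q) (hp1 : 1 ≤ p) (hr1 : 1 ≤ r)
    (hsq : s ≤ q) (hsp : s ≤ p) (hsr : s ≤ r)
    (hrel : 1/q + 1/p = 1/s + 1/r) :
    eNorm μ r (fun x => eNorm μ s (fun t => F t * G' (x + t))) ≤
      eNorm μ q F * eNorm μ p G' := by
  have hs0 : s ≠ 0 := (lt_of_lt_of_le zero_lt_one hs).ne'
  rcases eq_or_ne s ∞ with rfl | hstop
  · have hqt : q = ∞ := top_le_iff.mp hsq
    have hpt : p = ∞ := top_le_iff.mp hsp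
    have hrt : r = ∞ := top_le_iff.mp hsr
    subst hqt; subst hpt; subst hrt
    simp only [eNorm_eq_essSup]
    refine essSup_le_of_ae_le _ (Filter.Eventually.of_forall fun x => ?_)
    calc essSup (fun t => F t * G' (x + t)) μ
        ≤ essSup F μ * essSup (fun t => G' (x + t)) μ :=
          ENNReal.essSup_mul_le _ _
      _ = essSup F μ * essSup G' μ := by rw [essSup_translate hG x]
  · have hS : 0 < s.toReal := ENNReal.toReal_pos hs0 hstop
    have inner_eq : (fun x => eNorm μ s (fun t => F t * G' (x + t))) =
        fun x => (∫⁻ t, F t ^ s.toReal * G' (x + t) ^ s.toReal ∂μ) ^ (1 / s.toReal) := by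
      funext x
      rw [eNorm_eq_lintegral μ hstop]
      congr 1
      exact lintegral_congr fun t => ENNReal.mul_rpow_of_nonneg _ _ hS.le
    have hofS : ENNReal.ofReal s.toReal = s := ENNReal.ofReal_toReal hstop
    have hof1S : ENNReal.ofReal (1 / s.toReal) = s⁻¹ := by
      rw [one_div, ENNReal.ofReal_inv_of_pos hS, hofS]
    have hmul_eq : ∀ e : ℝ≥0∞, e * ENNReal.ofReal (1 / s.toReal) = e / s := by
      intro e; rw [hof1S, div_eq_mul_inv]
    have hdivmul : ∀ e : ℝ≥0∞, e / s * ENNReal.ofReal s.toReal = e := by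
      intro e; rw [hofS]; exact ENNReal.div_mul_cancel hs0 hstop
    have hinvdiv : ∀ e : ℝ≥0∞, 1 / (e / s) = s * (1/e) := by
      intro e
      rw [one_div, ENNReal.inv_div (Or.inl hstop) (Or.inl hs0), div_eq_mul_inv, one_div]
    have hrel' : 1/(q/s) + 1/(p/s) = 1 + 1/(r/s) := by
      rw [hinvdiv, hinvdiv, hinvdiv, ← mul_add, hrel, mul_add,
        show s * (1/s) = 1 by rw [one_div]; exact ENNReal.mul_inv_cancel hs0 hstop]
    have hle_div : ∀ e : ℝ≥0∞, s ≤ e → 1 ≤ e / s := by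
      intro e he
      rw [ENNReal.le_div_iff_mul_le (Or.inl hs0) (Or.inl hstop), one_mul]
      exact he
    have hY := young (μ := μ) (hF.pow_const s.toReal) (hG.pow_const s.toReal)
      (hle_div q hsq) (hle_div p hsp) (hle_div r hsr) hrel'
    rw [inner_eq, eNorm_rpow (by positivity) _, hmul_eq]
    have hq0' : (q/s) ≠ 0 := (lt_of_lt_of_le zero_lt_one (hle_div q hsq)).ne'
    have hFr := eNorm_rpow (μ := μ) (p := q/s) hS F
    have hGr := eNorm_rpow (μ := μ) (p := p/s) hS G'
    rw [hdivmul] at hFr hGr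
    calc (eNorm μ (r/s) fun x => ∫⁻ t, F t ^ s.toReal * G' (x + t) ^ s.toReal ∂μ) ^ (1/s.toReal)
        ≤ (eNorm μ (q/s) (fun t => F t ^ s.toReal) *
            eNorm μ (p/s) (fun t => G' t ^ s.toReal)) ^ (1/s.toReal) :=
          ENNReal.rpow_le_rpow hY (by positivity)
      _ = ((eNorm μ q F) ^ s.toReal * (eNorm μ p G') ^ s.toReal) ^ (1/s.toReal) := by
          rw [hFr, hGr]
      _ = eNorm μ q F * eNorm μ p G' := by
          rw [ENNReal.mul_rpow_of_nonneg _ _ (by positivity), ← ENNReal.rpow_mul,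
            ← ENNReal.rpow_mul, mul_one_div, div_self hS.ne', ENNReal.rpow_one,
            ENNReal.rpow_one]

end Group

section Main

/-- the case `m = 2` of the Young-type inequality of Lemma `lemma:Young2`. -/
theorem stmt7 (d : ℕ) (hd : 1 ≤ d) (q₁ q₂ q₃ s₁ s₂ s₃ : ℝ≥0∞)
    (hq₁ : 1 ≤ q₁) (hq₂ : 1 ≤ q₂) (hq₃ : 1 ≤ q₃)
    (hs₁ : 1 ≤ s₁) (hs₂ : 1 ≤ s₂) (hs₃ : 1 ≤ s₃)
    (h11 : s₁ ≤ q₁) (h22 : s₂ ≤ q₂)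
    (hB2a : (1 / s₃).toReal - (1 / q₁).toReal ≤ (1 / q₂).toReal - (1 / s₂).toReal)
    (hB2b : (1 / s₃).toReal - (1 / q₂).toReal ≤ 0)
    (hB3 : ((1 / q₁).toReal - (1 / s₁).toReal) + ((1 / q₂).toReal - (1 / s₂).toReal)
        = (1 / s₃).toReal - (1 / q₃).toReal)
    (f₁ f₂ g : Ed d → ℂ)
    (hf₁ : MemLp f₁ q₁ volume) (hf₂ : MemLp f₂ q₂ volume) (hg : MemLp g q₃ volume) :
    eNorm volume s₃ (fun x => eNorm volume s₂ (fun t₂ => eNorm volume s₁ (fun t₁ =>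
        (‖f₁ t₁ * f₂ t₂ * g (x + t₁ + t₂)‖₊ : ℝ≥0∞))))
      ≤ eLpNorm f₁ q₁ volume * eLpNorm f₂ q₂ volume * eLpNorm g q₃ volume := by
  have hq₁0 : q₁ ≠ 0 := (lt_of_lt_of_le zero_lt_one hq₁).ne'
  have hq₂0 : q₂ ≠ 0 := (lt_of_lt_of_le zero_lt_one hq₂).ne'
  have hq₃0 : q₃ ≠ 0 := (lt_of_lt_of_le zero_lt_one hq₃).ne'
  have hs₁0 : s₁ ≠ 0 := (lt_of_lt_of_le zero_lt_one hs₁).ne'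
  have hs₂0 : s₂ ≠ 0 := (lt_of_lt_of_le zero_lt_one hs₂).ne'
  have hs₃0 : s₃ ≠ 0 := (lt_of_lt_of_le zero_lt_one hs₃).ne'
  have hfin : ∀ e : ℝ≥0∞, e ≠ 0 → 1/e ≠ ∞ := fun e he => by
    rw [one_div, Ne, ENNReal.inv_eq_top]; exact he
  have hof : ∀ e : ℝ≥0∞, e ≠ 0 → ENNReal.ofReal (1/e).toReal = 1/e := fun e he =>
    ENNReal.ofReal_toReal (hfin e he)
  have hmono : ∀ e f : ℝ≥0∞, e ≠ 0 → e ≤ f → (1/f).toReal ≤ (1/e).toReal := by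
    intro e f he hef
    refine ENNReal.toReal_mono (hfin e he) ?_
    rw [one_div, one_div]
    exact ENNReal.inv_le_inv.mpr hef
  have hle1 : ∀ e : ℝ≥0∞, 1 ≤ e → (1/e).toReal ≤ 1 := by
    intro e he
    have h1 : 1/e ≤ 1 := by rw [one_div]; exact ENNReal.inv_le_one.mpr he
    simpa using ENNReal.toReal_mono (by simp) h1
  have hle_of_toReal : ∀ {e f : ℝ≥0∞}, e ≠ 0 → f ≠ 0 →
      (1/e).toReal ≤ (1/f).toReal → f ≤ e := by
    intro e f he hf h'
    have h1 : 1/e ≤ 1/f := by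
      rw [← hof e he, ← hof f hf]
      exact ENNReal.ofReal_le_ofReal h'
    rwa [one_div, one_div, ENNReal.inv_le_inv] at h1
  -- measurable representatives
  have hN₁ : AEMeasurable (fun t => (‖f₁ t‖₊ : ℝ≥0∞)) (volume : Measure (Ed d)) := hf₁.1.enorm
  have hN₂ : AEMeasurable (fun t => (‖f₂ t‖₊ : ℝ≥0∞)) (volume : Measure (Ed d)) := hf₂.1.enorm
  have hNg : AEMeasurable (fun t => (‖g t‖₊ : ℝ≥0∞)) (volume : Measure (Ed d)) := hg.1.enorm
  set F₁ : Ed d → ℝ≥0∞ := hN₁.mk _ with hF₁def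
  have hF₁m : Measurable F₁ := hN₁.measurable_mk
  have hF₁e : (fun t => (‖f₁ t‖₊ : ℝ≥0∞)) =ᵐ[volume] F₁ := hN₁.ae_eq_mk
  set Gg : Ed d → ℝ≥0∞ := hNg.mk _ with hGgdef
  have hGgm : Measurable Gg := hNg.measurable_mk
  have hGge : (fun t => (‖g t‖₊ : ℝ≥0∞)) =ᵐ[volume] Gg := hNg.ae_eq_mk
  set H : Ed d → ℝ≥0∞ := fun u => eNorm volume s₁ (fun t₁ => F₁ t₁ * Gg (u + t₁)) with hHdef
  -- rewrite LHS
  have hLHS : (fun x => eNorm volume s₂ (fun t₂ => eNorm volume s₁ (fun t₁ =>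
      (‖f₁ t₁ * f₂ t₂ * g (x + t₁ + t₂)‖₊ : ℝ≥0∞)))) =
      fun x => eNorm volume s₂ (fun t₂ => (‖f₂ t₂‖₊ : ℝ≥0∞) * H (x + t₂)) := by
    funext x
    congr 1
    funext t₂
    have e1 : (fun t₁ => (‖f₁ t₁ * f₂ t₂ * g (x + t₁ + t₂)‖₊ : ℝ≥0∞)) =
        fun t₁ => (‖f₂ t₂‖₊ : ℝ≥0∞) *
          ((‖f₁ t₁‖₊ : ℝ≥0∞) * (‖g ((x + t₂) + t₁)‖₊ : ℝ≥0∞)) := by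
      funext t₁
      rw [show x + t₁ + t₂ = (x + t₂) + t₁ by abel]
      push_cast [nnnorm_mul]
      ring
    rw [e1]
    have hg' : (fun t₁ => (‖g ((x + t₂) + t₁)‖₊ : ℝ≥0∞)) =ᵐ[(volume : Measure (Ed d))]
        fun t₁ => Gg ((x + t₂) + t₁) := by
      have := (measurePreserving_add_left (volume : Measure (Ed d))
        (x + t₂)).quasiMeasurePreserving.ae_eq_comp hGge
      simpa [Function.comp_def] using this
    have e2 : (fun t₁ => (‖f₂ t₂‖₊ : ℝ≥0∞) *
          ((‖f₁ t₁‖₊ : ℝ≥0∞) * (‖g ((x + t₂) + t₁)‖₊ : ℝ≥0∞))) =ᵐ[(volume : Measure (Ed d))]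
        fun t₁ => (‖f₂ t₂‖₊ : ℝ≥0∞) * (F₁ t₁ * Gg ((x + t₂) + t₁)) := by
      filter_upwards [hF₁e, hg'] with t₁ h1 h2
      rw [show ((‖f₁ t₁‖₊ : ℝ≥0∞)) = F₁ t₁ from h1,
        show ((‖g ((x + t₂) + t₁)‖₊ : ℝ≥0∞)) = Gg ((x + t₂) + t₁) from h2]
    rw [eNorm_congr_ae e2, eNorm_const_mul hs₁0 ENNReal.coe_ne_top]
  rw [hLHS]
  -- bridge eNorm / eLpNorm
  have bF₁ : eNorm volume q₁ F₁ = eLpNorm f₁ q₁ volume := by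
    rw [← eNorm_congr_ae (p := q₁) hF₁e]
    exact eNorm_nnnorm_eq_eLpNorm volume hq₁0 (f := f₁)
  have bGg : eNorm volume q₃ Gg = eLpNorm g q₃ volume := by
    rw [← eNorm_congr_ae (p := q₃) hGge]
    exact eNorm_nnnorm_eq_eLpNorm volume hq₃0 (f := g)
  have bF₂ : ∀ e : ℝ≥0∞, e ≠ 0 →
      eNorm volume e (fun t => (‖f₂ t‖₊ : ℝ≥0∞)) = eLpNorm f₂ e volume := fun e he =>
    eNorm_nnnorm_eq_eLpNorm volume he (f := f₂)
  rcases eq_or_ne s₁ ∞ with hs₁top | hs₁top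
  · -- degenerate case s₁ = ∞
    subst hs₁top
    have hq₁top : q₁ = ∞ := top_le_iff.mp h11
    subst hq₁top
    have hzero : ((1:ℝ≥0∞)/∞).toReal = 0 := by simp
    have ha2b2 : (1/q₂).toReal ≤ (1/s₂).toReal := hmono s₂ q₂ hs₂0 h22
    rw [hzero] at hB3 hB2a
    have ha30 : (1/q₃).toReal = 0 := by
      have h1 : (1/q₃).toReal ≤ 0 := by linarith
      linarith [ENNReal.toReal_nonneg (a := 1/q₃)]
    have hq₃top : q₃ = ∞ := by
      have h1 : 1/q₃ = 0 := by
        rcases (ENNReal.toReal_eq_zero_iff _).mp ha30 with h | h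
        · exact h
        · exact absurd h (hfin q₃ hq₃0)
      rwa [one_div, ENNReal.inv_eq_zero] at h1
    rw [hq₃top, hzero] at hB3
    have hb30 : (1/s₃).toReal = 0 := by
      have h1 : (1/s₃).toReal ≤ 0 := by linarith
      linarith [ENNReal.toReal_nonneg (a := 1/s₃)]
    have hq₂s₂ : q₂ = s₂ := by
      have h1 : (1/q₂).toReal = (1/s₂).toReal := by linarith
      have h2 : 1/q₂ = 1/s₂ := by
        rw [← hof q₂ hq₂0, ← hof s₂ hs₂0, h1]
      rw [one_div, one_div] at h2
      simpa using congrArg (·⁻¹) h2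
    have hs₃top : s₃ = ∞ := by
      have h1 : 1/s₃ = 0 := by
        rcases (ENNReal.toReal_eq_zero_iff _).mp hb30 with h | h
        · exact h
        · exact absurd h (hfin s₃ hs₃0)
      rwa [one_div, ENNReal.inv_eq_zero] at h1
    subst hq₃top
    subst hs₃top
    set c : ℝ≥0∞ := essSup F₁ volume * essSup Gg volume with hcdef
    have hHb : ∀ u, H u ≤ c := by
      intro u
      show eNorm volume ⊤ (fun t₁ => F₁ t₁ * Gg (u + t₁)) ≤ c
      simp only [eNorm_eq_essSup]
      calc essSup (fun t₁ => F₁ t₁ * Gg (u + t₁)) volume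
          ≤ essSup F₁ volume * essSup (fun t₁ => Gg (u + t₁)) volume :=
            ENNReal.essSup_mul_le _ _
        _ = c := by rw [essSup_translate hGgm u]
    have hRHS : eLpNorm f₁ ∞ volume * eLpNorm f₂ q₂ volume * eLpNorm g ∞ volume =
        c * eLpNorm f₂ q₂ volume := by
      rw [← bF₁, ← bGg, hcdef, eNorm_eq_essSup, eNorm_eq_essSup]
      ring
    rw [hRHS, eNorm_eq_essSup]
    rcases eq_or_ne c ∞ with hctop | hctop
    · rcases eq_or_ne (eLpNorm f₂ q₂ volume) 0 with hz | hz
      · have hf₂z : f₂ =ᵐ[volume] 0 := (eLpNorm_eq_zero_iff hf₂.1 hq₂0).mp hz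
        refine le_trans (essSup_le_of_ae_le 0 (Filter.Eventually.of_forall fun x => ?_))
          zero_le
        beta_reduce
        have hz2 : (fun t₂ => (‖f₂ t₂‖₊ : ℝ≥0∞) * H (x + t₂)) =ᵐ[(volume : Measure (Ed d))]
            fun _ => 0 := by
          filter_upwards [hf₂z] with t₂ h1
          simp [h1]
        rw [eNorm_congr_ae hz2]
        exact le_of_eq (eNorm_zero hs₂0)
      · rw [hctop, ENNReal.top_mul hz]
        exact le_top
    · refine essSup_le_of_ae_le _ (Filter.Eventually.of_forall fun x => ?_)
      beta_reduce
      calc eNorm volume s₂ (fun t₂ => (‖f₂ t₂‖₊ : ℝ≥0∞) * H (x + t₂))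
          ≤ eNorm volume s₂ (fun t₂ => c * (‖f₂ t₂‖₊ : ℝ≥0∞)) :=
            eNorm_mono fun t₂ => by
              rw [mul_comm c _]
              exact mul_le_mul_right (hHb (x + t₂)) _
        _ = c * eNorm volume s₂ (fun t₂ => (‖f₂ t₂‖₊ : ℝ≥0∞)) :=
            eNorm_const_mul hs₂0 hctop _
        _ = c * eLpNorm f₂ q₂ volume := by rw [hq₂s₂, bF₂ s₂ hs₂0]
  · -- main case s₁ ≠ ∞
    set ρ : ℝ := (1/s₂).toReal + (1/s₃).toReal - (1/q₂).toReal with hρdef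
    have ha2b2 : (1/q₂).toReal ≤ (1/s₂).toReal := hmono s₂ q₂ hs₂0 h22
    have ha1b1 : (1/q₁).toReal ≤ (1/s₁).toReal := hmono s₁ q₁ hs₁0 h11
    have hρ0 : 0 ≤ ρ := by
      have := ENNReal.toReal_nonneg (a := 1/s₃)
      rw [hρdef]; linarith
    have ha3b1 : (1/q₃).toReal ≤ (1/s₁).toReal := by linarith
    have hρb2 : ρ ≤ (1/s₂).toReal := by rw [hρdef]; linarith
    have hρb1 : ρ ≤ (1/s₁).toReal := by
      have := ENNReal.toReal_nonneg (a := 1/q₃)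
      rw [hρdef]; linarith
    have hρ1 : ρ ≤ 1 := le_trans hρb2 (hle1 s₂ hs₂)
    set r : ℝ≥0∞ := (ENNReal.ofReal ρ)⁻¹ with hrdef
    have hr0 : r ≠ 0 := by
      rw [hrdef, Ne, ENNReal.inv_eq_zero]
      exact ENNReal.ofReal_ne_top
    have h1r : 1/r = ENNReal.ofReal ρ := by rw [hrdef, one_div, inv_inv]
    have h1rtoReal : (1/r).toReal = ρ := by rw [h1r, ENNReal.toReal_ofReal hρ0]
    have hr1 : 1 ≤ r := by
      rw [hrdef]
      exact ENNReal.one_le_inv.mpr (ENNReal.ofReal_le_one.mpr hρ1)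
    have hs₂r : s₂ ≤ r := hle_of_toReal hr0 hs₂0 (by rw [h1rtoReal]; exact hρb2)
    have hs₁r : s₁ ≤ r := hle_of_toReal hr0 hs₁0 (by rw [h1rtoReal]; exact hρb1)
    have hs₁q₃ : s₁ ≤ q₃ := hle_of_toReal hq₃0 hs₁0 ha3b1
    have hs₂s₃ : s₂ ≤ s₃ := hle_of_toReal hs₃0 hs₂0 (by linarith)
    have hrel1 : 1/q₂ + 1/r = 1/s₂ + 1/s₃ := by
      rw [h1r, ← hof q₂ hq₂0, ← hof s₂ hs₂0, ← hof s₃ hs₃0,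
        ← ENNReal.ofReal_add ENNReal.toReal_nonneg hρ0,
        ← ENNReal.ofReal_add ENNReal.toReal_nonneg ENNReal.toReal_nonneg]
      congr 1
      rw [hρdef]; ring
    have hrel2 : 1/q₁ + 1/q₃ = 1/s₁ + 1/r := by
      rw [h1r, ← hof q₁ hq₁0, ← hof q₃ hq₃0, ← hof s₁ hs₁0,
        ← ENNReal.ofReal_add ENNReal.toReal_nonneg ENNReal.toReal_nonneg,
        ← ENNReal.ofReal_add ENNReal.toReal_nonneg hρ0]
      congr 1
      rw [hρdef]; linarith
    have hS₁ : 0 < s₁.toReal := ENNReal.toReal_pos hs₁0 hs₁top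
    have hHm : Measurable H := by
      have hHeq : H = fun u =>
          (∫⁻ t, F₁ t ^ s₁.toReal * Gg (u + t) ^ s₁.toReal ∂volume) ^ (1/s₁.toReal) := by
        funext u
        show eNorm volume s₁ (fun t₁ => F₁ t₁ * Gg (u + t₁)) = _
        rw [eNorm_eq_lintegral volume hs₁top]
        congr 1
        exact lintegral_congr fun t => ENNReal.mul_rpow_of_nonneg _ _ hS₁.le
      rw [hHeq]
      exact (Measurable.lintegral_prod_right
        (f := fun u t => F₁ t ^ s₁.toReal * Gg (u + t) ^ s₁.toReal)
        (((hF₁m.comp measurable_snd).pow_const _).mul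
          ((hGgm.comp (measurable_fst.add measurable_snd)).pow_const _))).pow_const _
    calc eNorm volume s₃ (fun x => eNorm volume s₂ fun t₂ => (‖f₂ t₂‖₊ : ℝ≥0∞) * H (x + t₂))
        ≤ eNorm volume q₂ (fun t₂ => (‖f₂ t₂‖₊ : ℝ≥0∞)) * eNorm volume r H :=
          mixedYoung hN₂ hHm hs₂ hq₂ hr1 hs₃ h22 hs₂r hs₂s₃ hrel1
      _ ≤ eNorm volume q₂ (fun t₂ => (‖f₂ t₂‖₊ : ℝ≥0∞)) *
            (eNorm volume q₁ F₁ * eNorm volume q₃ Gg) := by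
          refine mul_le_mul_right ?_ _
          exact mixedYoung hF₁m.aemeasurable hGgm hs₁ hq₁ hq₃ hr1 h11 hs₁q₃ hs₁r hrel2
      _ = eLpNorm f₁ q₁ volume * eLpNorm f₂ q₂ volume * eLpNorm g q₃ volume := by
          rw [bF₁, bGg, bF₂ q₂ hq₂0]
          ring

end Main

end
end

section
/- Let ψ₁ be a Schwartz function on ℝ with 0 ≤ ψ₁ ≤ 1 and support a compact subset of (0,1), let ψ(y) = ψ₁(y) − ψ₁(−y), and let Ψ(x,ξ₁,ξ₂) = ψ(x)ψ(ξ₂)ψ(ξ₁−ξ₂). Let σ(y) = −πi·sign(y) and σ_BH(x,ξ₁,ξ₂) = σ(ξ₁−ξ₂). Then for all x, t₁, t₂, ξ₁, ξ₂, ν ∈ ℝ: |𝒱_Ψ σ_BH(x, t₁, t₂, ξ₁, ξ₂, ν)| = |ψ̂(ν)| · |∫_ℝ σ(u) e^{2πi u t₁} ψ(u − (ξ₁−ξ₂)) du| · |ψ̂(t₁+t₂)|, where ψ̂(η) = ∫_ℝ ψ(y) e^{−2πi y η} dy. -/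
open MeasureTheory Complex
open scoped ENNReal NNReal

noncomputable section

/-- Short-time Fourier transform on `ℝ`: `V_φ f (t, ν)`. -/
def STFT1 (φ f : ℝ → ℂ) (t ν : ℝ) : ℂ := ∫ y : ℝ, f y * e2pi (-(y * ν)) * φ (y - t)

/-- The Gaussian window `e^{-x²}` on `ℝ`. -/
def gauss1 : ℝ → ℂ := fun x => (Real.exp (-x ^ 2) : ℝ)

/-- Modulation space norm `‖f‖_{M^{p,q}}` on `ℝ` with the Gaussian window. -/
def modNorm1 (p q : ℝ≥0∞) (f : ℝ → ℂ) : ℝ≥0∞ :=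
  eNorm volume q fun ν => eNorm volume p fun t => (‖STFT1 gauss1 f t ν‖₊ : ℝ≥0∞)

/-- Fourier transform on `ℝ`. -/
def FT1 (f : ℝ → ℂ) (ξ : ℝ) : ℂ := ∫ y : ℝ, f y * e2pi (-(y * ξ))

/-- Symbol short-time Fourier transform of a symbol on `ℝ³`. -/
def symbSTFT3 (Ψ σ : ℝ × ℝ × ℝ → ℂ) (x t₁ t₂ ξ₁ ξ₂ ν : ℝ) : ℂ :=
  ∫ X : ℝ × ℝ × ℝ, σ X * Ψ (X.1 - x, X.2.1 - ξ₁, X.2.2 - ξ₂) *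
    e2pi (-(X.1 * ν - t₁ * X.2.1 - t₂ * X.2.2))

/-- Symbol short-time Fourier transform of a symbol on `ℝ⁴`. -/
def symbSTFT4 (Ψ σ : ℝ × ℝ × ℝ × ℝ → ℂ) (x t₁ t₂ t₃ ξ₁ ξ₂ ξ₃ ν : ℝ) : ℂ :=
  ∫ X : ℝ × ℝ × ℝ × ℝ, σ X * Ψ (X.1 - x, X.2.1 - ξ₁, X.2.2.1 - ξ₂, X.2.2.2 - ξ₃) *
    e2pi (-(X.1 * ν - t₁ * X.2.1 - t₂ * X.2.2.1 - t₃ * X.2.2.2))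

/-- The bilinear Hilbert transform as an (absolutely convergent) bilinear Fourier
multiplier for Schwartz functions. -/
def BH (f g : ℝ → ℂ) (x : ℝ) : ℂ :=
  ∫ ξ : ℝ × ℝ, (-(Real.pi : ℂ) * Complex.I * (Real.sign (ξ.1 - ξ.2) : ℝ)) *
    FT1 f ξ.1 * FT1 g ξ.2 * e2pi (x * (ξ.1 + ξ.2))

/-- The trilinear Hilbert transform as an (absolutely convergent) trilinear Fourier
multiplier for Schwartz functions. -/
def TH (f g h : ℝ → ℂ) (x : ℝ) : ℂ :=
  ∫ ξ : ℝ × ℝ × ℝ, ((Real.pi : ℂ) * Complex.I * (Real.sign (ξ.1 - ξ.2.1 - 2 * ξ.2.2) : ℝ)) *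
    FT1 f ξ.1 * FT1 g ξ.2.1 * FT1 h ξ.2.2 * e2pi (x * (ξ.1 + ξ.2.1 + ξ.2.2))


lemma e2pi_add (a b : ℝ) : e2pi (a + b) = e2pi a * e2pi b := by
  rw [e2pi, e2pi, e2pi, ← Complex.exp_add]; push_cast; ring_nf

lemma norm_e2pi (a : ℝ) : ‖e2pi a‖ = 1 := by
  have h : e2pi a = Complex.exp ((2 * Real.pi * a : ℝ) * Complex.I) := by
    rw [e2pi]; push_cast; ring_nf
  rw [h, Complex.norm_exp_ofReal_mul_I]

def shearT : ℝ × ℝ ≃ᵐ ℝ × ℝ where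
  toFun := fun z => (z.1 + z.2, z.2)
  invFun := fun z => (z.1 - z.2, z.2)
  left_inv := fun z => by simp
  right_inv := fun z => by simp
  measurable_toFun := (measurable_fst.add measurable_snd).prodMk measurable_snd
  measurable_invFun := (measurable_fst.sub measurable_snd).prodMk measurable_snd

lemma integral_shear (g : ℝ × ℝ → ℂ) :
    ∫ p : ℝ × ℝ, g p ∂((volume : Measure ℝ).prod volume)
      = ∫ p : ℝ × ℝ, g (p.1 + p.2, p.2) ∂((volume : Measure ℝ).prod volume) :=
  ((measurePreserving_add_prod (volume : Measure ℝ) volume).integral_comp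
    shearT.measurableEmbedding g).symm

lemma shift_int (f : ℝ → ℂ) (η c : ℝ) :
    ∫ y : ℝ, f (y - c) * e2pi (η * y) = e2pi (η * c) * ∫ y : ℝ, f y * e2pi (η * y) := by
  have h := integral_add_right_eq_self (μ := (volume : Measure ℝ))
    (fun y => f (y - c) * e2pi (η * y)) c
  rw [← h]
  have h2 : (fun y : ℝ => f (y + c - c) * e2pi (η * (y + c)))
      = fun y : ℝ => e2pi (η * c) * (f y * e2pi (η * y)) := by
    funext y
    rw [add_sub_cancel_right, show η * (y + c) = η * y + η * c by ring, e2pi_add]; ring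
  rw [h2, integral_const_mul]

/-- factorization of the symbol STFT of the bilinear Hilbert transform
symbol `σ_BH(x,ξ₁,ξ₂) = −πi·sign(ξ₁−ξ₂)` with respect to the window
`Ψ(x,ξ₁,ξ₂) = ψ(x)ψ(ξ₂)ψ(ξ₁−ξ₂)`. -/
theorem stmt11 (ψ₁ : SchwartzMap ℝ ℝ)
    (hpos : ∀ y, 0 ≤ ψ₁ y) (hle : ∀ y, ψ₁ y ≤ 1)
    (hsupp : tsupport (⇑ψ₁) ⊆ Set.Ioo 0 1)
    (ψ : ℝ → ℂ) (hψ : ψ = fun y => ((ψ₁ y - ψ₁ (-y) : ℝ) : ℂ))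
    (Ψ : ℝ × ℝ × ℝ → ℂ) (hΨ : Ψ = fun X => ψ X.1 * ψ X.2.2 * ψ (X.2.1 - X.2.2))
    (σ : ℝ → ℂ) (hσ : σ = fun y => -(Real.pi : ℂ) * Complex.I * (Real.sign y : ℝ))
    (σBH : ℝ × ℝ × ℝ → ℂ) (hσBH : σBH = fun X => σ (X.2.1 - X.2.2))
    (x t₁ t₂ ξ₁ ξ₂ ν : ℝ) :
    ‖symbSTFT3 Ψ σBH x t₁ t₂ ξ₁ ξ₂ ν‖
      = ‖∫ y : ℝ, ψ y * e2pi (-(y * ν))‖ *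
        ‖∫ u : ℝ, σ u * e2pi (u * t₁) * ψ (u - (ξ₁ - ξ₂))‖ *
        ‖∫ y : ℝ, ψ y * e2pi (-(y * (t₁ + t₂)))‖ := by
  subst hΨ hσBH
  have hodd : ∀ y, ψ (-y) = -ψ y := by
    intro y; rw [hψ]; push_cast; ring
  set f1 : ℝ → ℂ := fun a => ψ (a - x) * e2pi (-ν * a) with hf1
  set f2 : ℝ → ℂ := fun u => σ u * e2pi (t₁ * u) * ψ (u - (ξ₁ - ξ₂)) with hf2
  set f3 : ℝ → ℂ := fun v => ψ (v - ξ₂) * e2pi ((t₁ + t₂) * v) with hf3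
  set g : ℝ × ℝ → ℂ := fun p =>
    σ (p.1 - p.2) * ψ (p.2 - ξ₂) * ψ (p.1 - p.2 - (ξ₁ - ξ₂)) * e2pi (t₁ * p.1 + t₂ * p.2)
    with hg
  have key : symbSTFT3 (fun X => ψ X.1 * ψ X.2.2 * ψ (X.2.1 - X.2.2))
        (fun X => σ (X.2.1 - X.2.2)) x t₁ t₂ ξ₁ ξ₂ ν
      = (∫ a : ℝ, f1 a) * ((∫ u : ℝ, f2 u) * (∫ v : ℝ, f3 v)) := by
    rw [symbSTFT3]
    have h1 : (fun X : ℝ × ℝ × ℝ =>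
          (fun X : ℝ × ℝ × ℝ => σ (X.2.1 - X.2.2)) X *
            (fun X : ℝ × ℝ × ℝ => ψ X.1 * ψ X.2.2 * ψ (X.2.1 - X.2.2))
              (X.1 - x, X.2.1 - ξ₁, X.2.2 - ξ₂) *
            e2pi (-(X.1 * ν - t₁ * X.2.1 - t₂ * X.2.2)))
        = fun X : ℝ × ℝ × ℝ => f1 X.1 * g X.2 := by
      funext X
      simp only [hf1, hg]
      rw [show X.2.1 - ξ₁ - (X.2.2 - ξ₂) = X.2.1 - X.2.2 - (ξ₁ - ξ₂) by ring,
        show -(X.1 * ν - t₁ * X.2.1 - t₂ * X.2.2)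
          = -ν * X.1 + (t₁ * X.2.1 + t₂ * X.2.2) by ring, e2pi_add]
      ring
    rw [h1, Measure.volume_eq_prod, integral_prod_mul]
    congr 1
    rw [Measure.volume_eq_prod, integral_shear]
    have h2 : (fun p : ℝ × ℝ => g (p.1 + p.2, p.2)) = fun p : ℝ × ℝ => f2 p.1 * f3 p.2 := by
      funext p
      simp only [hg, hf2, hf3]
      rw [show p.1 + p.2 - p.2 = p.1 by ring,
        show t₁ * (p.1 + p.2) + t₂ * p.2 = t₁ * p.1 + (t₁ + t₂) * p.2 by ring, e2pi_add]
      ring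
    rw [h2, integral_prod_mul]
  rw [key]
  have e1 : ∫ a : ℝ, f1 a = e2pi (-ν * x) * ∫ y : ℝ, ψ y * e2pi (-(y * ν)) := by
    rw [hf1, shift_int ψ (-ν) x]
    congr 1
    exact integral_congr_ae (Filter.Eventually.of_forall fun y => by
      show ψ y * e2pi (-ν * y) = ψ y * e2pi (-(y * ν))
      rw [show -ν * y = -(y * ν) by ring])
  have e2 : ∫ u : ℝ, f2 u = ∫ u : ℝ, σ u * e2pi (u * t₁) * ψ (u - (ξ₁ - ξ₂)) := by
    rw [hf2]
    exact integral_congr_ae (Filter.Eventually.of_forall fun u => by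
      show σ u * e2pi (t₁ * u) * ψ (u - (ξ₁ - ξ₂)) = σ u * e2pi (u * t₁) * ψ (u - (ξ₁ - ξ₂))
      rw [mul_comm t₁ u])
  have e3 : ∫ v : ℝ, f3 v
      = e2pi ((t₁ + t₂) * ξ₂) * -∫ y : ℝ, ψ y * e2pi (-(y * (t₁ + t₂))) := by
    rw [hf3, shift_int ψ (t₁ + t₂) ξ₂]
    congr 1
    have hneg := integral_neg_eq_self (fun y : ℝ => ψ y * e2pi ((t₁ + t₂) * y)) volume
    rw [← hneg]
    have : (fun y : ℝ => ψ (-y) * e2pi ((t₁ + t₂) * -y))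
        = fun y : ℝ => -(ψ y * e2pi (-(y * (t₁ + t₂)))) := by
      funext y
      rw [hodd, show (t₁ + t₂) * -y = -(y * (t₁ + t₂)) by ring]; ring
    rw [this, integral_neg]
  rw [e1, e2, e3]
  simp only [norm_mul, norm_neg, norm_e2pi, one_mul]
  ring

end
end
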